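/- For any two density matrices ρ0, ρ1 on a finite-dimensional complex Hilbert space, there exists a PVM {E_α} (a finite family of mutually orthogonal projection operators with Σ_α E_α = 1) such that F(ρ0, ρ1) = Σ_α √( tr(ρ0 E_α) · tr(ρ1 E_α) ); hence the minimum over all POVMs of the Bhattacharyya overlap Σ_α √(p0(α) p1(α)) equals the fidelity and is attained by a projection valued measure. -/

import Mathlib

open Matrix Kronecker
open scoped ComplexOrder

-- Positive semidefinite square root (zero if not PSD).
open Classical in
noncomputable def psqrt {n : Type*} [Fintype n] [DecidableEq n] (A : Matrix n n ℂ) :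
    Matrix n n ℂ :=
  if h : A.PosSemidef then
    (h.1.eigenvectorUnitary : Matrix n n ℂ) *
      diagonal ((↑) ∘ (Real.sqrt ·) ∘ h.1.eigenvalues) *
      (star h.1.eigenvectorUnitary : Matrix n n ℂ)
  else 0

/-- Fidelity F(ρ0,ρ1) = tr √(√ρ0 ρ1 √ρ0). -/
noncomputable def fidelity {n : Type*} [Fintype n] [DecidableEq n] (ρ0 ρ1 : Matrix n n ℂ) : ℝ :=
  (psqrt (psqrt ρ0 * ρ1 * psqrt ρ0)).trace.re

/-- Operator (ℓ²→ℓ²) norm of a matrix. -/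
noncomputable def opNorm {n : Type*} [Fintype n] [DecidableEq n] (A : Matrix n n ℂ) : ℝ :=
  ‖LinearMap.toContinuousLinearMap (Matrix.toEuclideanLin A)‖

/-- Partial trace over the right (second) factor. -/
noncomputable def ptraceRight {m n : Type*} [Fintype m] [Fintype n]
    (ρ : Matrix (m × n) (m × n) ℂ) : Matrix m m ℂ :=
  Matrix.of fun i j => ∑ k, ρ (i, k) (j, k)

/-- Partial trace over the left (first) factor. -/
noncomputable def ptraceLeft {m n : Type*} [Fintype m] [Fintype n]
    (ρ : Matrix (m × n) (m × n) ℂ) : Matrix n n ℂ :=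
  Matrix.of fun i j => ∑ k, ρ (k, i) (k, j)


namespace FidAux

variable {n : Type*} [Fintype n] [DecidableEq n]

noncomputable def fc {A : Matrix n n ℂ} (hA : A.IsHermitian) (f : ℝ → ℝ) : Matrix n n ℂ :=
  (hA.eigenvectorUnitary : Matrix n n ℂ) * diagonal (fun i => (f (hA.eigenvalues i) : ℂ)) *
    (star (hA.eigenvectorUnitary : Matrix n n ℂ))

variable {A : Matrix n n ℂ} (hA : A.IsHermitian)

lemma fc_mul_fc (f g : ℝ → ℝ) : fc hA f * fc hA g = fc hA (fun t => f t * g t) := by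
  have h1 : (star (hA.eigenvectorUnitary : Matrix n n ℂ)) * (hA.eigenvectorUnitary : Matrix n n ℂ) = 1 :=
    Unitary.coe_star_mul_self _
  unfold fc
  rw [show ∀ (B C D E F : Matrix n n ℂ), B*C*D*(B*E*F) = B*C*((D*B)*E)*F by
    intros; simp only [mul_assoc]]
  rw [h1, one_mul, mul_assoc _ (diagonal _) (diagonal _), diagonal_mul_diagonal]
  push_cast
  simp only [mul_assoc]

lemma fc_id : fc hA (fun t => t) = A := by
  have := hA.spectral_theorem
  rw [Unitary.conjStarAlgAut_apply] at this
  unfold fc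
  exact this.symm

lemma fc_mul_self (f : ℝ → ℝ) : fc hA f * A = fc hA (fun t => f t * t) := by
  have h := fc_mul_fc hA f (fun t => t)
  rwa [fc_id] at h

lemma self_mul_fc (f : ℝ → ℝ) : A * fc hA f = fc hA (fun t => t * f t) := by
  have h := fc_mul_fc hA (fun t => t) f
  rwa [fc_id] at h

lemma fc_add (f g : ℝ → ℝ) : fc hA f + fc hA g = fc hA (fun t => f t + g t) := by
  unfold fc
  rw [← add_mul, ← mul_add, diagonal_add]
  push_cast
  rfl

lemma fc_const (r : ℝ) : fc hA (fun _ => r) = (r : ℂ) • 1 := by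
  have h2 : (hA.eigenvectorUnitary : Matrix n n ℂ) * (star (hA.eigenvectorUnitary : Matrix n n ℂ)) = 1 :=
    Unitary.coe_mul_star_self _
  unfold fc
  rw [show (diagonal (fun _ : n => (r:ℂ))) = (r:ℂ) • 1 by
    ext i j
    by_cases h : i = j <;> simp [diagonal_apply, Matrix.one_apply, h]]
  simp only [mul_smul_comm, smul_mul_assoc, mul_one]
  rw [h2]

lemma fc_zero : fc hA (fun _ => 0) = 0 := by
  simpa using fc_const hA 0

lemma fc_conjTranspose (f : ℝ → ℝ) : (fc hA f)ᴴ = fc hA f := by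
  have hD : (star fun i => ((f (hA.eigenvalues i)):ℂ)) = fun i => ((f (hA.eigenvalues i)):ℂ) := by
    funext i
    simp
  unfold fc
  simp only [conjTranspose_mul, conjTranspose_conjTranspose, star_eq_conjTranspose,
    diagonal_conjTranspose, hD, mul_assoc]

lemma fc_congr {f g : ℝ → ℝ} (h : ∀ t, f t = g t) : fc hA f = fc hA g := by
  exact congrArg (fc hA) (funext h)

lemma fc_smul (r : ℝ) (f : ℝ → ℝ) : (r : ℂ) • fc hA f = fc hA (fun t => r * f t) := by
  unfold fc
  rw [← smul_mul_assoc, ← mul_smul_comm]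
  congr 2
  ext i j
  by_cases h : i = j <;> simp [diagonal_apply, h]

lemma fc_posSemidef (f : ℝ → ℝ) (hf : ∀ i, 0 ≤ f (hA.eigenvalues i)) : (fc hA f).PosSemidef := by
  unfold fc
  have : (diagonal (fun i => (f (hA.eigenvalues i) : ℂ))).PosSemidef := by
    refine PosSemidef.diagonal fun i => ?_
    exact Complex.zero_le_real.2 (hf _)
  simpa [star_eq_conjTranspose] using this.mul_mul_conjTranspose_same (hA.eigenvectorUnitary : Matrix n n ℂ)

lemma fc_congr' {f g : ℝ → ℝ} (h : ∀ i, f (hA.eigenvalues i) = g (hA.eigenvalues i)) :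
    fc hA f = fc hA g := by
  unfold fc
  simp only [h]

noncomputable def _root_.Matrix.PosSemidef.sqrt {B : Matrix n n ℂ} (h : B.PosSemidef) :
    Matrix n n ℂ :=
  fc h.1 (fun t => Real.sqrt t)

lemma _root_.Matrix.PosSemidef.posSemidef_sqrt {B : Matrix n n ℂ} (h : B.PosSemidef) :
    h.sqrt.PosSemidef :=
  fc_posSemidef h.1 _ fun _ => Real.sqrt_nonneg _

lemma _root_.Matrix.PosSemidef.sqrt_mul_self {B : Matrix n n ℂ} (h : B.PosSemidef) :
    h.sqrt * h.sqrt = B := by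
  unfold Matrix.PosSemidef.sqrt
  rw [fc_mul_fc, fc_congr' h.1 (g := fun t => t) fun i => Real.mul_self_sqrt (h.eigenvalues_nonneg i),
    fc_id]

lemma fc_trace (f : ℝ → ℝ) : (fc hA f).trace = ∑ i, (f (hA.eigenvalues i) : ℂ) := by
  unfold fc
  rw [trace_mul_cycle]
  rw [Unitary.coe_star_mul_self, one_mul, trace_diagonal]


lemma trace_psd_nonneg {G : Matrix n n ℂ} (hG : G.PosSemidef) : 0 ≤ G.trace := by
  rw [Matrix.trace]
  refine Finset.sum_nonneg fun i _ => ?_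
  have h := hG.dotProduct_mulVec_nonneg (Pi.single i 1)
  have he : star (Pi.single i 1 : n → ℂ) ⬝ᵥ (G *ᵥ Pi.single i 1) = G i i := by
    simp [dotProduct, Pi.single_apply, Matrix.mulVec_single, apply_ite]
  rw [he] at h
  exact h

lemma trace_mul_psd_nonneg {G H : Matrix n n ℂ} (hG : G.PosSemidef) (hH : H.PosSemidef) :
    0 ≤ (G * H).trace := by
  obtain ⟨R, hRH, hRR⟩ : ∃ R : Matrix n n ℂ, Rᴴ = R ∧ R * R = G :=
    ⟨hG.sqrt, hG.posSemidef_sqrt.1.eq, hG.sqrt_mul_self⟩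
  rw [← hRR, mul_assoc, trace_mul_comm]
  have := hH.mul_mul_conjTranspose_same R
  rw [hRH] at this
  exact trace_psd_nonneg this

lemma trace_CS (X Y : Matrix n n ℂ) :
    ‖(Xᴴ * Y).trace‖ ≤ Real.sqrt ((Xᴴ*X).trace.re) * Real.sqrt ((Yᴴ*Y).trace.re) := by
  classical
  let x : EuclideanSpace ℂ (n × n) := WithLp.toLp 2 (fun p : n × n => X p.1 p.2)
  let y : EuclideanSpace ℂ (n × n) := WithLp.toLp 2 (fun p : n × n => Y p.1 p.2)
  have key : ∀ Z W : Matrix n n ℂ,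
      (Zᴴ * W).trace = ∑ p : n × n, (starRingEnd ℂ) (Z p.1 p.2) * W p.1 p.2 := by
    intro Z W
    rw [← Finset.univ_product_univ, Finset.sum_product, Matrix.trace]
    simp only [Matrix.diag_apply, Matrix.mul_apply, conjTranspose_apply]
    rw [Finset.sum_comm]
    rfl
  have hinner : (Xᴴ * Y).trace = inner (𝕜 := ℂ) x y := by
    rw [key X Y, PiLp.inner_apply]
    exact Finset.sum_congr rfl fun p _ => by simp [x, y, mul_comm]
  have hx : (Xᴴ*X).trace.re = ‖x‖^2 := by
    have h1 : (Xᴴ * X).trace = inner (𝕜 := ℂ) x x := by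
      rw [key X X, PiLp.inner_apply]; exact Finset.sum_congr rfl fun p _ => by simp [x, mul_comm]; exact Complex.mul_conj' _
    rw [h1, ← inner_self_eq_norm_sq (𝕜 := ℂ) x]
    rfl
  have hy : (Yᴴ*Y).trace.re = ‖y‖^2 := by
    have h1 : (Yᴴ * Y).trace = inner (𝕜 := ℂ) y y := by
      rw [key Y Y, PiLp.inner_apply]; exact Finset.sum_congr rfl fun p _ => by simp [y, mul_comm]; exact Complex.mul_conj' _
    rw [h1, ← inner_self_eq_norm_sq (𝕜 := ℂ) y]
    rfl
  rw [hinner, hx, hy, Real.sqrt_sq (norm_nonneg x), Real.sqrt_sq (norm_nonneg y)]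
  exact norm_inner_le_norm (𝕜 := ℂ) x y

section columns

variable {M : Matrix n n ℂ} (hM : M.IsHermitian)

noncomputable def col (i : n) : n → ℂ := fun a => (hM.eigenvectorUnitary : Matrix n n ℂ) a i

lemma col_orth (i j : n) : star (col hM i) ⬝ᵥ col hM j = if i = j then 1 else 0 := by
  have h1 : (star (hM.eigenvectorUnitary : Matrix n n ℂ)) * (hM.eigenvectorUnitary : Matrix n n ℂ) = 1 :=
    Unitary.coe_star_mul_self _
  have h2 : ((star (hM.eigenvectorUnitary : Matrix n n ℂ)) * (hM.eigenvectorUnitary : Matrix n n ℂ)) i j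
      = (1 : Matrix n n ℂ) i j := by rw [h1]
  rw [Matrix.one_apply] at h2
  rw [← h2, Matrix.mul_apply]
  simp [dotProduct, col, Matrix.star_apply, star_eq_conjTranspose, conjTranspose_apply]

lemma col_complete : ∑ i, vecMulVec (col hM i) (star (col hM i)) = (1 : Matrix n n ℂ) := by
  have h1 : (hM.eigenvectorUnitary : Matrix n n ℂ) * (star (hM.eigenvectorUnitary : Matrix n n ℂ)) = 1 :=
    Unitary.coe_mul_star_self _
  ext a b
  rw [← h1, Matrix.mul_apply]
  simp [Matrix.sum_apply, vecMulVec_apply, col, Matrix.star_apply, star_eq_conjTranspose,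
    conjTranspose_apply]

lemma mulVec_col (i : n) : M *ᵥ col hM i = ((hM.eigenvalues i : ℂ)) • col hM i := by
  have h1 : M * (hM.eigenvectorUnitary : Matrix n n ℂ)
      = (hM.eigenvectorUnitary : Matrix n n ℂ) *
        (diagonal (RCLike.ofReal ∘ hM.eigenvalues) : Matrix n n ℂ) := by
    have h1 := congrArg (fun B => B * (hM.eigenvectorUnitary : Matrix n n ℂ)) hM.spectral_theorem
    simp only [Unitary.conjStarAlgAut_apply] at h1
    rw [mul_assoc, Unitary.coe_star_mul_self, mul_one] at h1
    exact h1
  funext a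
  have h2 : (M * (hM.eigenvectorUnitary : Matrix n n ℂ)) a i
      = ((hM.eigenvectorUnitary : Matrix n n ℂ) *
        (diagonal (RCLike.ofReal ∘ hM.eigenvalues) : Matrix n n ℂ)) a i := by
    rw [h1]
  rw [Matrix.mul_apply, Matrix.mul_diagonal] at h2
  simpa [Matrix.mulVec, dotProduct, col, mul_comm] using h2

end columns

lemma trace_mul_outer (X : Matrix n n ℂ) (u : n → ℂ) :
    (X * vecMulVec u (star u)).trace = star u ⬝ᵥ (X *ᵥ u) := by
  rw [Matrix.trace]
  simp only [Matrix.diag_apply, Matrix.mul_apply, vecMulVec_apply, dotProduct, Matrix.mulVec,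
    Pi.star_apply]
  refine Finset.sum_congr rfl fun a _ => ?_
  rw [Finset.mul_sum]
  refine Finset.sum_congr rfl fun b _ => ?_
  ring

lemma outer_conjTranspose (u : n → ℂ) : (vecMulVec u (star u))ᴴ = vecMulVec u (star u) := by
  ext a b
  simp [vecMulVec_apply, conjTranspose_apply, mul_comm]

lemma outer_mul_outer (u w : n → ℂ) :
    vecMulVec u (star u) * vecMulVec w (star w) = (star u ⬝ᵥ w) • vecMulVec u (star w) := by
  ext a b
  simp only [Matrix.mul_apply, vecMulVec_apply, Matrix.smul_apply, dotProduct, Pi.star_apply,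
    smul_eq_mul]
  rw [Finset.sum_mul]
  refine Finset.sum_congr rfl fun c _ => ?_
  ring


section main

theorem part2 (ρ0 ρ1 : Matrix n n ℂ) (h0 : ρ0.PosSemidef) (h1 : ρ1.PosSemidef)
    (k : ℕ) (E : Fin k → Matrix n n ℂ) (hE : ∀ α, (E α).PosSemidef)
    (hsum : ∑ α, E α = 1) :
    fidelity ρ0 ρ1 ≤ ∑ α, Real.sqrt ((ρ0 * E α).trace.re * (ρ1 * E α).trace.re) := by
  classical
  -- basic square roots
  set S := psqrt ρ0 with hS_def
  have hSeq : S = h0.sqrt := dif_pos h0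
  have hS : S.PosSemidef := by rw [hSeq]; exact h0.posSemidef_sqrt
  have hSH : Sᴴ = S := hS.1
  have hSS : S * S = ρ0 := by rw [hSeq]; exact h0.sqrt_mul_self
  have hT0 : (S * ρ1 * S).PosSemidef := by
    have := h1.mul_mul_conjTranspose_same S
    rwa [hSH] at this
  set T := psqrt (S * ρ1 * S) with hT_def
  have hTeq : T = hT0.sqrt := dif_pos hT0
  have hT : T.PosSemidef := by rw [hTeq]; exact hT0.posSemidef_sqrt
  have hTH : Tᴴ = T := hT.1
  have hTT : T * T = S * ρ1 * S := by rw [hTeq]; exact hT0.sqrt_mul_self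
  have hfid : fidelity ρ0 ρ1 = T.trace.re := rfl
  set R := h1.sqrt with hR_def
  have hR : R.PosSemidef := h1.posSemidef_sqrt
  have hRH : Rᴴ = R := hR.1
  have hRR : R * R = ρ1 := h1.sqrt_mul_self
  -- functional calculus for T
  have hTHer : T.IsHermitian := hT.1
  set Tinv := fc hTHer (fun t => t⁻¹) with hTinv_def
  set PT := fc hTHer (fun t => if t = 0 then 0 else 1) with hPT_def
  have hfcT : fc hTHer (fun t => t) = T := fc_id hTHer
  have hTinvT : Tinv * T = PT := by
    rw [hTinv_def, hPT_def]
    exact (fc_mul_self hTHer _).trans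
      (fc_congr hTHer fun t => by by_cases h : t = 0 <;> simp [h])
  have hTTinv : T * Tinv = PT := by
    rw [hTinv_def, hPT_def]
    exact (self_mul_fc hTHer _).trans
      (fc_congr hTHer fun t => by by_cases h : t = 0 <;> simp [h])
  have hPTT : PT * T = T := by
    rw [hPT_def]
    exact (fc_mul_self hTHer _).trans
      (((fc_congr hTHer fun t => by by_cases h : t = 0 <;> simp [h]).trans hfcT))
  have hPTPT : PT * PT = PT := by
    rw [hPT_def, fc_mul_fc]
    exact fc_congr hTHer fun t => by by_cases h : t = 0 <;> simp [h]
  have h1mPT : (1 - PT).PosSemidef := by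
    have he : PT + fc hTHer (fun t => if t = 0 then 1 else 0) = 1 := by
      rw [hPT_def, fc_add]
      refine (fc_congr hTHer (g := fun _ => 1) fun t => by by_cases h : t = 0 <;> simp [h]).trans ?_
      rw [fc_const]
      simp
    have heq : 1 - PT = fc hTHer (fun t => if t = 0 then 1 else 0) := by
      rw [← he, add_sub_cancel_left]
    rw [heq]
    exact fc_posSemidef hTHer _ fun i => by by_cases h : (hTHer.eigenvalues i) = 0 <;> simp [h]
  -- the contraction V
  set V := R * S * Tinv with hV_def
  have hVH : Vᴴ = Tinv * (S * R) := by
    rw [hV_def]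
    rw [show (R * S * Tinv)ᴴ = Tinvᴴ * (Sᴴ * Rᴴ) from by
      rw [conjTranspose_mul, conjTranspose_mul]]
    rw [hSH, hRH, hTinv_def, fc_conjTranspose]
  have hSRRS : S * (R * (R * S)) = T * T := by
    rw [hTT, ← hRR]
    noncomm_ring
  have hVV : Vᴴ * V = PT := by
    rw [hVH, hV_def]
    calc Tinv * (S * R) * (R * S * Tinv) = Tinv * (S * (R * (R * S))) * Tinv := by noncomm_ring
    _ = Tinv * (T * T) * Tinv := by rw [hSRRS]
    _ = (Tinv * T) * (T * Tinv) := by noncomm_ring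
    _ = PT * PT := by rw [hTinvT, hTTinv]
    _ = PT := hPTPT
  have hVtrace : (R * (S * Vᴴ)).trace = T.trace := by
    rw [hVH]
    have h1' : R * (S * (Tinv * (S * R))) = (R * S) * (Tinv * (S * R)) := by noncomm_ring
    rw [h1', trace_mul_comm]
    have h2' : Tinv * (S * R) * (R * S) = Tinv * (S * (R * (R * S))) := by noncomm_ring
    rw [h2', hSRRS, ← mul_assoc, hTinvT, hPTT]
  -- decompose over the POVM
  have hsum_t : ∑ α, (R * (E α * (S * Vᴴ))).trace = T.trace := by
    rw [← hVtrace, ← trace_sum]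
    congr 1
    rw [← Finset.mul_sum, ← Finset.sum_mul, hsum, one_mul]
  -- per-element bound
  have hbound : ∀ α, (R * (E α * (S * Vᴴ))).trace.re ≤
      Real.sqrt ((ρ0 * E α).trace.re * (ρ1 * E α).trace.re) := by
    intro α
    set F := (hE α).sqrt with hF_def
    have hFH : Fᴴ = F := (hE α).posSemidef_sqrt.1
    have hFF : F * F = E α := (hE α).sqrt_mul_self
    set X := F * R with hX_def
    set Y := F * (S * Vᴴ) with hY_def
    have hXY : Xᴴ * Y = R * (E α * (S * Vᴴ)) := by
      rw [hX_def, hY_def, conjTranspose_mul, hFH, hRH, ← hFF]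
      noncomm_ring
    have hXX : (Xᴴ * X).trace = (ρ1 * E α).trace := by
      rw [hX_def, conjTranspose_mul, hFH, hRH]
      rw [show R * F * (F * R) = R * ((F * F) * R) by noncomm_ring, hFF]
      rw [trace_mul_comm, show E α * R * R = E α * (R * R) by noncomm_ring, hRR, trace_mul_comm]
    have hYH : Yᴴ * Y = V * ((S * (E α * S)) * Vᴴ) := by
      rw [hY_def, conjTranspose_mul, conjTranspose_mul, hFH, hSH, conjTranspose_conjTranspose,
        ← hFF]
      noncomm_ring
    have hG : (S * (E α * S)).PosSemidef := by
      have := (hE α).mul_mul_conjTranspose_same S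
      rw [hSH] at this
      rwa [show S * E α * S = S * (E α * S) from by noncomm_ring] at this
    have hGtr : (S * (E α * S)).trace = (ρ0 * E α).trace := by
      rw [trace_mul_comm, show E α * S * S = E α * (S * S) from by noncomm_ring, hSS,
        trace_mul_comm]
    have hYtr : (Yᴴ * Y).trace = ((S * (E α * S)) * PT).trace := by
      rw [hYH, trace_mul_comm, mul_assoc, hVV]
    have hYle : (Yᴴ * Y).trace.re ≤ (ρ0 * E α).trace.re := by
      have hdec : (S * (E α * S)).trace = ((S * (E α * S)) * PT).trace
          + ((S * (E α * S)) * (1 - PT)).trace := by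
        rw [← trace_add, ← mul_add]
        simp
      have hpos : 0 ≤ ((S * (E α * S)) * (1 - PT)).trace :=
        trace_mul_psd_nonneg hG h1mPT
      have hposre : 0 ≤ ((S * (E α * S)) * (1 - PT)).trace.re := (Complex.le_def.1 hpos).1
      rw [hYtr, ← hGtr]
      have := congrArg Complex.re hdec
      rw [Complex.add_re] at this
      linarith
    have hY0 : 0 ≤ (Yᴴ * Y).trace.re :=
      (Complex.le_def.1 (trace_psd_nonneg (posSemidef_conjTranspose_mul_self Y))).1
    have hX0 : 0 ≤ (ρ1 * E α).trace.re :=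
      (Complex.le_def.1 (trace_mul_psd_nonneg h1 (hE α))).1
    have h00 : 0 ≤ (ρ0 * E α).trace.re :=
      (Complex.le_def.1 (trace_mul_psd_nonneg h0 (hE α))).1
    calc (R * (E α * (S * Vᴴ))).trace.re ≤ ‖(R * (E α * (S * Vᴴ))).trace‖ :=
          Complex.re_le_norm _
    _ = ‖(Xᴴ * Y).trace‖ := by rw [hXY]
    _ ≤ Real.sqrt ((Xᴴ*X).trace.re) * Real.sqrt ((Yᴴ*Y).trace.re) := trace_CS X Y
    _ ≤ Real.sqrt ((ρ1 * E α).trace.re) * Real.sqrt ((ρ0 * E α).trace.re) := by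
          rw [hXX]
          exact mul_le_mul_of_nonneg_left (Real.sqrt_le_sqrt hYle) (Real.sqrt_nonneg _)
    _ = Real.sqrt ((ρ0 * E α).trace.re * (ρ1 * E α).trace.re) := by
          rw [← Real.sqrt_mul hX0, mul_comm ((ρ1 * E α).trace.re)]
  rw [hfid, ← hsum_t, Complex.re_sum]
  exact Finset.sum_le_sum fun α _ => hbound α

theorem part1 (ρ0 ρ1 : Matrix n n ℂ) (h0 : ρ0.PosSemidef) (h1 : ρ1.PosSemidef) :
    ∃ (k : ℕ) (E : Fin k → Matrix n n ℂ),
      (∀ α, (E α)ᴴ = E α) ∧ (∀ α, E α * E α = E α) ∧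
      (∀ α β, α ≠ β → E α * E β = 0) ∧ (∑ α, E α = 1) ∧
      fidelity ρ0 ρ1 = ∑ α, Real.sqrt ((ρ0 * E α).trace.re * (ρ1 * E α).trace.re) := by
  classical
  set S := psqrt ρ0 with hS_def
  have hSeq : S = h0.sqrt := dif_pos h0
  have hS : S.PosSemidef := by rw [hSeq]; exact h0.posSemidef_sqrt
  have hSH : Sᴴ = S := hS.1
  have hSS : S * S = ρ0 := by rw [hSeq]; exact h0.sqrt_mul_self
  have hT0 : (S * ρ1 * S).PosSemidef := by
    have := h1.mul_mul_conjTranspose_same S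
    rwa [hSH] at this
  set T := psqrt (S * ρ1 * S) with hT_def
  have hTeq : T = hT0.sqrt := dif_pos hT0
  have hT : T.PosSemidef := by rw [hTeq]; exact hT0.posSemidef_sqrt
  have hTH : Tᴴ = T := hT.1
  have hTT : T * T = S * ρ1 * S := by rw [hTeq]; exact hT0.sqrt_mul_self
  have hfid : fidelity ρ0 ρ1 = T.trace.re := rfl
  -- functional calculus for S
  have hSHer : S.IsHermitian := hS.1
  set Sinv := fc hSHer (fun t => t⁻¹) with hSinv_def
  set Pm := fc hSHer (fun t => if t = 0 then 0 else 1) with hPm_def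
  set Qm := fc hSHer (fun t => if t = 0 then 1 else 0) with hQm_def
  have hfcS : fc hSHer (fun t => t) = S := fc_id hSHer
  have e1 : Sinv * S = Pm := by
    rw [hSinv_def, hPm_def]
    exact (fc_mul_self hSHer _).trans
      (fc_congr hSHer fun t => by by_cases h : t = 0 <;> simp [h])
  have e2 : S * Sinv = Pm := by
    rw [hSinv_def, hPm_def]
    exact (self_mul_fc hSHer _).trans
      (fc_congr hSHer fun t => by by_cases h : t = 0 <;> simp [h])
  have e3 : Qm * S = 0 := by
    rw [hQm_def]
    exact (fc_mul_self hSHer _).trans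
      (((fc_congr hSHer (g := fun _ => 0) fun t => by by_cases h : t = 0 <;> simp [h]).trans
        (fc_zero hSHer)))
  have e3' : S * Qm = 0 := by
    rw [hQm_def]
    exact (self_mul_fc hSHer _).trans
      (((fc_congr hSHer (g := fun _ => 0) fun t => by by_cases h : t = 0 <;> simp [h]).trans
        (fc_zero hSHer)))
  have e4 : Pm + Qm = 1 := by
    rw [hPm_def, hQm_def, fc_add]
    refine (fc_congr hSHer (g := fun _ => 1) fun t => by by_cases h : t = 0 <;> simp [h]).trans ?_
    rw [fc_const]
    simp
  have ePP : Pm * Pm = Pm := by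
    rw [hPm_def, fc_mul_fc]
    exact fc_congr hSHer fun t => by by_cases h : t = 0 <;> simp [h]
  have eSP : S * Pm = S := by
    rw [hPm_def]
    exact (self_mul_fc hSHer _).trans
      ((fc_congr hSHer fun t => by by_cases h : t = 0 <;> simp [h]).trans hfcS)
  have ePSinv : Pm * Sinv = Sinv := by
    rw [hPm_def, hSinv_def, fc_mul_fc]
    exact fc_congr hSHer fun t => by by_cases h : t = 0 <;> simp [h]
  have eSinvP : Sinv * Pm = Sinv := by
    rw [hPm_def, hSinv_def, fc_mul_fc]
    exact fc_congr hSHer fun t => by by_cases h : t = 0 <;> simp [h]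
  have eQSinv : Qm * Sinv = 0 := by
    rw [hQm_def, hSinv_def, fc_mul_fc]
    exact (fc_congr hSHer (g := fun _ => 0) fun t => by by_cases h : t = 0 <;> simp [h]).trans
      (fc_zero hSHer)
  have eSinvQ : Sinv * Qm = 0 := by
    rw [hQm_def, hSinv_def, fc_mul_fc]
    exact (fc_congr hSHer (g := fun _ => 0) fun t => by by_cases h : t = 0 <;> simp [h]).trans
      (fc_zero hSHer)
  have ePQ : Pm * Qm = 0 := by
    rw [hPm_def, hQm_def, fc_mul_fc]
    exact (fc_congr hSHer (g := fun _ => 0) fun t => by by_cases h : t = 0 <;> simp [h]).trans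
      (fc_zero hSHer)
  have eQQ : Qm * Qm = Qm := by
    rw [hQm_def, fc_mul_fc]
    exact fc_congr hSHer fun t => by by_cases h : t = 0 <;> simp [h]
  have hPmH : Pmᴴ = Pm := fc_conjTranspose hSHer _
  have hQmH : Qmᴴ = Qm := fc_conjTranspose hSHer _
  have hSinvH : Sinvᴴ = Sinv := fc_conjTranspose hSHer _
  -- the kernel projection kills T
  have hQT : Qm * T = 0 := by
    refine Matrix.self_mul_conjTranspose_eq_zero.1 ?_
    have hconj : (Qm * T)ᴴ = T * Qm := by rw [conjTranspose_mul, hTH, hQmH]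
    rw [hconj]
    calc Qm * T * (T * Qm) = Qm * (T * T) * Qm := by noncomm_ring
    _ = Qm * (S * ρ1 * S) * Qm := by rw [hTT]
    _ = (Qm * S) * ρ1 * (S * Qm) := by noncomm_ring
    _ = 0 := by rw [e3, e3', zero_mul, mul_zero]
  have hTQ : T * Qm = 0 := by
    have h := congrArg conjTranspose hQT
    rwa [conjTranspose_mul, hTH, hQmH, conjTranspose_zero] at h
  have hPmeq : Pm = 1 - Qm := by rw [← e4, add_sub_cancel_right]
  have hPT : Pm * T = T := by rw [hPmeq, sub_mul, one_mul, hQT, sub_zero]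
  have hTP : T * Pm = T := by rw [hPmeq, mul_sub, mul_one, hTQ, sub_zero]
  -- the operator N
  set N := Sinv * T * Sinv with hN_def
  have hNH' : Nᴴ = N := by
    rw [hN_def, conjTranspose_mul, conjTranspose_mul, hSinvH, hTH, mul_assoc]
  have hNHer : N.IsHermitian := hNH'
  have hNpsd : N.PosSemidef := by
    have h := hT.mul_mul_conjTranspose_same Sinv
    rwa [hSinvH] at h
  have hNrho : N * ρ0 * N = Pm * ρ1 * Pm := by
    calc N * ρ0 * N = Sinv * (T * ((Sinv * S) * (S * Sinv)) * T) * Sinv := by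
          rw [hN_def, ← hSS]; noncomm_ring
    _ = Sinv * (T * (Pm * Pm) * T) * Sinv := by rw [e1, e2]
    _ = Sinv * ((T * Pm) * (Pm * T)) * Sinv := by noncomm_ring
    _ = Sinv * (T * T) * Sinv := by rw [hTP, hPT]
    _ = Sinv * (S * ρ1 * S) * Sinv := by rw [hTT]
    _ = (Sinv * S) * ρ1 * (S * Sinv) := by noncomm_ring
    _ = Pm * ρ1 * Pm := by rw [e1, e2]
  have htrN : (ρ0 * N).trace = T.trace := by
    have hρN : ρ0 * N = S * (T * Sinv) := by
      calc ρ0 * N = (S * (S * Sinv)) * (T * Sinv) := by rw [← hSS, hN_def]; noncomm_ring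
      _ = (S * Pm) * (T * Sinv) := by rw [e2]
      _ = S * (T * Sinv) := by rw [eSP]
    rw [hρN, trace_mul_comm]
    calc (T * Sinv * S).trace = (T * (Sinv * S)).trace := by rw [mul_assoc]
    _ = (T * Pm).trace := by rw [e1]
    _ = T.trace := by rw [hTP]
  -- eigenvalue bound for N
  have hNtr : N.trace = ∑ i, ((hNHer.eigenvalues i : ℝ) : ℂ) :=
    (congrArg Matrix.trace (fc_id hNHer)).symm.trans (fc_trace hNHer _)
  have hNtr_re : N.trace.re = ∑ i, hNHer.eigenvalues i := by
    rw [hNtr, Complex.re_sum]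
    simp
  have heigN : ∀ i, 0 ≤ hNHer.eigenvalues i := fun i => hNpsd.eigenvalues_nonneg i
  have heig_le : ∀ i, hNHer.eigenvalues i ≤ N.trace.re := by
    intro i
    rw [hNtr_re]
    exact Finset.single_le_sum (fun j _ => heigN j) (Finset.mem_univ i)
  set c : ℝ := N.trace.re + 1 with hc_def
  have heig_lt : ∀ i, hNHer.eigenvalues i < c := fun i => lt_of_le_of_lt (heig_le i) (by
    rw [hc_def]; linarith)
  have hNtr0 : 0 ≤ N.trace.re := (Complex.le_def.1 (trace_psd_nonneg hNpsd)).1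
  have hc_pos : 0 < c := by rw [hc_def]; linarith
  -- c is not an eigenvalue of N
  have hno : ∀ a : n → ℂ, N *ᵥ a = (c : ℂ) • a → a = 0 := by
    intro a ha
    set B := fc hNHer (fun t => N.trace.re - t) with hB_def
    have hBpsd : B.PosSemidef := fc_posSemidef hNHer _ fun i => by
      have := heig_le i; linarith
    have h2 : B + fc hNHer (fun t => t) = ((N.trace.re : ℝ) : ℂ) • 1 := by
      rw [hB_def, fc_add]
      exact (fc_congr hNHer (g := fun _ => N.trace.re) fun t => by ring).trans (fc_const hNHer _)
    rw [fc_id hNHer] at h2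
    have hBN : B = ((N.trace.re : ℝ) : ℂ) • 1 - N := eq_sub_of_add_eq h2
    have h3 : B *ᵥ a = -a := by
      rw [hBN, sub_mulVec, smul_mulVec, one_mulVec, ha, ← sub_smul]
      have hcc : ((N.trace.re : ℝ) : ℂ) - (c : ℂ) = -1 := by
        rw [hc_def]; push_cast; ring
      rw [hcc, neg_smul, one_smul]
    have h4 : 0 ≤ star a ⬝ᵥ (B *ᵥ a) := hBpsd.dotProduct_mulVec_nonneg a
    rw [h3, dotProduct_neg] at h4
    have h5 : (0 : ℂ) ≤ star a ⬝ᵥ a :=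
      Finset.sum_nonneg fun i _ => star_mul_self_nonneg (a i)
    have h6 : star a ⬝ᵥ a = 0 := le_antisymm (by rwa [← neg_nonneg]) h5
    exact dotProduct_star_self_eq_zero.1 h6
  -- the measured operator M
  set M := N + (c : ℂ) • Qm with hM_def
  have hMH' : Mᴴ = M := by
    rw [hM_def, conjTranspose_add, conjTranspose_smul, hNH', hQmH]
    congr 1
    rw [show star ((c : ℝ) : ℂ) = ((c : ℝ) : ℂ) from by
      simp [Complex.star_def, Complex.conj_ofReal]]
  have hMHer : M.IsHermitian := hMH'
  have hcQ : ((c : ℂ) • Qm).PosSemidef := by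
    rw [hQm_def, fc_smul]
    exact fc_posSemidef hSHer _ fun i => by
      by_cases h : hSHer.eigenvalues i = 0 <;> simp [h] <;> positivity
  have hMpsd : M.PosSemidef := hNpsd.add hcQ
  -- more algebraic identities
  have ePmN : Pm * N = N := by rw [hN_def, ← mul_assoc, ← mul_assoc, ePSinv]
  have eNPm : N * Pm = N := by rw [hN_def, mul_assoc, eSinvP]
  have eQmN : Qm * N = 0 := by rw [hN_def, ← mul_assoc, ← mul_assoc, eQSinv, zero_mul, zero_mul]
  have ePmM : Pm * M = N := by
    rw [hM_def, mul_add, ePmN, mul_smul_comm, ePQ, smul_zero, add_zero]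
  have eQmM : Qm * M = (c : ℂ) • Qm := by
    rw [hM_def, mul_add, eQmN, zero_add, mul_smul_comm, eQQ]
  have eρ0Pm : ρ0 * Pm = ρ0 := by rw [← hSS, mul_assoc, eSP]
  have eρ0Qm : ρ0 * Qm = 0 := by rw [← hSS, mul_assoc, e3', mul_zero]
  -- eigenvectors of M
  set μ : n → ℝ := hMHer.eigenvalues with hμ_def
  set v : n → n → ℂ := col hMHer with hv_def
  have hμ0 : ∀ i, 0 ≤ μ i := fun i => hMpsd.eigenvalues_nonneg i
  have hMv : ∀ i, M *ᵥ v i = ((μ i : ℝ) : ℂ) • v i := fun i => mulVec_col hMHer i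
  set p : n → ℂ := fun i => star (v i) ⬝ᵥ (ρ0 *ᵥ v i) with hp_def
  set q : n → ℂ := fun i => star (v i) ⬝ᵥ (ρ1 *ᵥ v i) with hq_def
  set E' : n → Matrix n n ℂ := fun i => vecMulVec (v i) (star (v i)) with hE'_def
  have hEsum : ∑ i, E' i = 1 := col_complete hMHer
  have htr_all : ∀ X : Matrix n n ℂ, ∑ i, star (v i) ⬝ᵥ (X *ᵥ v i) = X.trace := by
    intro X
    calc ∑ i, star (v i) ⬝ᵥ (X *ᵥ v i) = ∑ i, (X * E' i).trace :=
          Finset.sum_congr rfl fun i _ => (trace_mul_outer X (v i)).symm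
    _ = X.trace := by rw [← trace_sum, ← Finset.mul_sum, hEsum, mul_one]
  have hp0 : ∀ i, 0 ≤ (p i).re := fun i => (Complex.le_def.1 (h0.dotProduct_mulVec_nonneg (v i))).1
  -- the key per-eigenvector identity
  have key : ∀ i, Real.sqrt ((p i).re * (q i).re) = μ i * (p i).re := by
    intro i
    by_cases hμc : μ i = c
    · -- eigenvalue c : the state ρ0 vanishes on v i
      have hNa : N *ᵥ (Pm *ᵥ v i) = (c : ℂ) • (Pm *ᵥ v i) := by
        rw [mulVec_mulVec, eNPm, ← ePmM, ← mulVec_mulVec, hMv i, mulVec_smul, hμc]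
      have ha0 : Pm *ᵥ v i = 0 := hno _ hNa
      have hρv : ρ0 *ᵥ v i = 0 := by
        rw [← eρ0Pm, ← mulVec_mulVec, ha0, mulVec_zero]
      have hpi : p i = 0 := by rw [hp_def]; simp only [hρv, dotProduct_zero]
      rw [hpi]
      simp
    · -- eigenvalue ≠ c : the eigenvector lies in the support of ρ0
      have hQv : Qm *ᵥ v i = 0 := by
        have h1' : (Qm * M) *ᵥ v i = (c : ℂ) • (Qm *ᵥ v i) := by
          rw [eQmM, smul_mulVec]
        have h2' : (Qm * M) *ᵥ v i = ((μ i : ℝ) : ℂ) • (Qm *ᵥ v i) := by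
          rw [← mulVec_mulVec, hMv i, mulVec_smul]
        have h3' : (((c : ℝ) : ℂ) - ((μ i : ℝ) : ℂ)) • (Qm *ᵥ v i) = 0 := by
          rw [sub_smul, ← h1', ← h2', sub_self]
        rcases smul_eq_zero.1 h3' with h | h
        · exact absurd (by
            have := sub_eq_zero.1 h
            exact_mod_cast this.symm) hμc
        · exact h
      have hPv : Pm *ᵥ v i = v i := by
        have h1' := congrArg (fun X => X *ᵥ v i) e4
        simp only [add_mulVec, one_mulVec] at h1'
        rwa [hQv, add_zero] at h1'
      have hNv : N *ᵥ v i = ((μ i : ℝ) : ℂ) • v i := by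
        rw [← ePmM, ← mulVec_mulVec, hMv i, mulVec_smul, hPv]
      have hsvP : star (v i) ᵥ* Pm = star (v i) := by
        rw [← hPmH, ← star_mulVec, hPv]
      have hsvN : star (v i) ᵥ* N = ((μ i : ℝ) : ℂ) • star (v i) := by
        rw [← hNH', ← star_mulVec, hNv, star_smul]
        congr 1
        simp [Complex.star_def, Complex.conj_ofReal]
      have hq1 : star (v i) ⬝ᵥ ((Pm * ρ1 * Pm) *ᵥ v i) = q i := by
        rw [← mulVec_mulVec, ← mulVec_mulVec, hPv, dotProduct_mulVec (star (v i)) Pm, hsvP]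
      have hq2 : q i = ((μ i : ℝ) : ℂ) * (((μ i : ℝ) : ℂ) * p i) := by
        rw [← hq1, ← hNrho]
        calc star (v i) ⬝ᵥ ((N * ρ0 * N) *ᵥ v i)
            = star (v i) ⬝ᵥ (N *ᵥ (ρ0 *ᵥ (N *ᵥ v i))) := by
              rw [← mulVec_mulVec, ← mulVec_mulVec]
        _ = star (v i) ⬝ᵥ (N *ᵥ (((μ i : ℝ) : ℂ) • (ρ0 *ᵥ v i))) := by
              rw [hNv, mulVec_smul]
        _ = ((μ i : ℝ) : ℂ) * (star (v i) ⬝ᵥ (N *ᵥ (ρ0 *ᵥ v i))) := by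
              rw [mulVec_smul, dotProduct_smul, smul_eq_mul]
        _ = ((μ i : ℝ) : ℂ) * ((((μ i : ℝ) : ℂ) • star (v i)) ⬝ᵥ (ρ0 *ᵥ v i)) := by
              rw [dotProduct_mulVec, hsvN]
        _ = ((μ i : ℝ) : ℂ) * (((μ i : ℝ) : ℂ) * p i) := by
              rw [smul_dotProduct, smul_eq_mul]
      have hqre : (q i).re = μ i * (μ i * (p i).re) := by
        rw [hq2, Complex.re_ofReal_mul, Complex.re_ofReal_mul]
      have harg : (p i).re * (q i).re = (μ i * (p i).re)^2 := by rw [hqre]; ring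
      rw [harg, Real.sqrt_sq (mul_nonneg (hμ0 i) (hp0 i))]
  -- summation
  have h6 : ∀ i, ((μ i : ℝ) : ℂ) * p i = star (v i) ⬝ᵥ ((ρ0 * M) *ᵥ v i) := by
    intro i
    rw [← mulVec_mulVec, hMv i, mulVec_smul, dotProduct_smul, smul_eq_mul]
  have h7 : (ρ0 * M).trace = T.trace := by
    rw [hM_def, mul_add, mul_smul_comm, eρ0Qm, smul_zero, add_zero, htrN]
  have h8 : ∑ i, μ i * (p i).re = T.trace.re := by
    have h9 : ∑ i, ((μ i : ℝ) : ℂ) * p i = (ρ0 * M).trace := by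
      rw [Finset.sum_congr rfl fun i _ => h6 i]
      exact htr_all _
    have h10 := congrArg Complex.re h9
    rw [Complex.re_sum] at h10
    calc ∑ i, μ i * (p i).re = ∑ i, (((μ i : ℝ) : ℂ) * p i).re :=
          Finset.sum_congr rfl fun i _ => (Complex.re_ofReal_mul _ _).symm
    _ = ((ρ0 * M).trace).re := h10
    _ = T.trace.re := congrArg Complex.re h7
  -- assemble the PVM
  refine ⟨Fintype.card n, fun α => E' ((Fintype.equivFin n).symm α), ?_, ?_, ?_, ?_, ?_⟩
  · intro α
    exact outer_conjTranspose _
  · intro α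
    rw [hE'_def]
    simp only []
    rw [outer_mul_outer, col_orth, if_pos rfl, one_smul]
  · intro α β hαβ
    rw [hE'_def]
    simp only []
    rw [outer_mul_outer, col_orth, if_neg (fun h => hαβ ((Fintype.equivFin n).symm.injective h)),
      zero_smul]
  · rw [Equiv.sum_comp (Fintype.equivFin n).symm E']
    exact hEsum
  · rw [hfid]
    calc T.trace.re = ∑ i, μ i * (p i).re := h8.symm
    _ = ∑ i, Real.sqrt ((p i).re * (q i).re) :=
          (Finset.sum_congr rfl fun i _ => key i).symm
    _ = ∑ α : Fin (Fintype.card n), Real.sqrt ((p ((Fintype.equivFin n).symm α)).re *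
          (q ((Fintype.equivFin n).symm α)).re) :=
          (Equiv.sum_comp (Fintype.equivFin n).symm
            (fun i => Real.sqrt ((p i).re * (q i).re))).symm
    _ = ∑ α : Fin (Fintype.card n),
          Real.sqrt ((ρ0 * E' ((Fintype.equivFin n).symm α)).trace.re *
            (ρ1 * E' ((Fintype.equivFin n).symm α)).trace.re) := by
          refine Finset.sum_congr rfl fun α _ => ?_
          rw [show (ρ0 * E' ((Fintype.equivFin n).symm α)).trace = p ((Fintype.equivFin n).symm α)
              from trace_mul_outer _ _,
            show (ρ1 * E' ((Fintype.equivFin n).symm α)).trace = q ((Fintype.equivFin n).symm α)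
              from trace_mul_outer _ _]

end main

end FidAux


/-- The minimum over POVMs of the Bhattacharyya overlap equals the fidelity
and is attained by a projection valued measure. -/
theorem fidelity_eq_min_overlap_attained_by_pvm {n : Type*} [Fintype n] [DecidableEq n]
    (ρ0 ρ1 : Matrix n n ℂ) (h0 : ρ0.PosSemidef) (h0t : ρ0.trace = 1)
    (h1 : ρ1.PosSemidef) (h1t : ρ1.trace = 1) :
    (∃ (k : ℕ) (E : Fin k → Matrix n n ℂ),
      (∀ α, (E α)ᴴ = E α) ∧ (∀ α, E α * E α = E α) ∧
      (∀ α β, α ≠ β → E α * E β = 0) ∧ (∑ α, E α = 1) ∧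
      fidelity ρ0 ρ1 = ∑ α, Real.sqrt ((ρ0 * E α).trace.re * (ρ1 * E α).trace.re)) ∧
    (∀ (k : ℕ) (E : Fin k → Matrix n n ℂ),
      (∀ α, (E α).PosSemidef) → (∑ α, E α = 1) →
      fidelity ρ0 ρ1 ≤ ∑ α, Real.sqrt ((ρ0 * E α).trace.re * (ρ1 * E α).trace.re)) :=
  ⟨FidAux.part1 ρ0 ρ1 h0 h1, fun k E hE hsum => FidAux.part2 ρ0 ρ1 h0 h1 k E hE hsum⟩
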